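/- Let A, u : ℝ × ℝ³ → ℝ³ and ψ : ℝ × ℝ³ → ℝ be C² fields, σ > 0 a constant (conductivity), B = ∇×A, J = ∇×B (current density in units with μ₀ = 1), and suppose the resistive Ohm's law form of Faraday's law ∂A/∂t + E + ∇ψ = 0 with E = −u×B + J/σ holds. Then ∂(A·B)/∂t + ∇·[ u (A·B) + (ψ − A·u) B + (J×A)/σ ] = −2 (J·B)/σ. -/

import Mathlib

noncomputable section

/-- Vectors in ℝ³. -/
abbrev V3 := Fin 3 → ℝ

/-- Euclidean dot product on ℝ³. -/
def dot3 (a b : V3) : ℝ := a 0 * b 0 + a 1 * b 1 + a 2 * b 2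

/-- Cross product on ℝ³. -/
def cross3 (a b : V3) : V3 :=
  ![a 1 * b 2 - a 2 * b 1, a 2 * b 0 - a 0 * b 2, a 0 * b 1 - a 1 * b 0]

/-- Euclidean norm on ℝ³. -/
def norm3 (a : V3) : ℝ := Real.sqrt (dot3 a a)

/-- Spatial partial derivative of a time-dependent scalar field. -/
def pdS (i : Fin 3) (f : ℝ × V3 → ℝ) (p : ℝ × V3) : ℝ :=
  fderiv ℝ (fun x => f (p.1, x)) p.2 (Pi.single i 1)

/-- Spatial gradient of a time-dependent scalar field. -/
def gradS (f : ℝ × V3 → ℝ) (p : ℝ × V3) : V3 := fun i => pdS i f p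

/-- Spatial divergence of a time-dependent vector field. -/
def divS (F : ℝ × V3 → V3) (p : ℝ × V3) : ℝ :=
  pdS 0 (fun q => F q 0) p + pdS 1 (fun q => F q 1) p + pdS 2 (fun q => F q 2) p

/-- Spatial curl of a time-dependent vector field. -/
def curlS (F : ℝ × V3 → V3) (p : ℝ × V3) : V3 :=
  ![pdS 1 (fun q => F q 2) p - pdS 2 (fun q => F q 1) p,
    pdS 2 (fun q => F q 0) p - pdS 0 (fun q => F q 2) p,
    pdS 0 (fun q => F q 1) p - pdS 1 (fun q => F q 0) p]

/-- Time partial derivative of a scalar field. -/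
def dtS (f : ℝ × V3 → ℝ) (p : ℝ × V3) : ℝ := deriv (fun t => f (t, p.2)) p.1

/-- Time partial derivative of a vector field. -/
def dtV (F : ℝ × V3 → V3) (p : ℝ × V3) : V3 := deriv (fun t => F (t, p.2)) p.1

/-- Fluid shear tensor `σ_ij = ½(∂u_i/∂x_j + ∂u_j/∂x_i) − (1/3) δ_ij ∇·u`. -/
def shearS (u : ℝ × V3 → V3) (p : ℝ × V3) : Fin 3 → Fin 3 → ℝ :=
  fun i j => (1 / 2) * (pdS j (fun q => u q i) p + pdS i (fun q => u q j) p)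
    - (1 / 3) * (if i = j then (1 : ℝ) else 0) * divS u p

/-- Matrix–vector product `(m·v)_i = Σ_j m_ij v_j`. -/
def matVec (m : Fin 3 → Fin 3 → ℝ) (v : V3) : V3 := fun i => ∑ j : Fin 3, m i j * v j

/-- Quadratic form `a·m·b = Σ_{i,j} a_i m_ij b_j`. -/
def quad3 (a : V3) (m : Fin 3 → Fin 3 → ℝ) (b : V3) : ℝ :=
  ∑ i : Fin 3, ∑ j : Fin 3, a i * m i j * b j

/-- Directional derivative `(v·∇)F` in the spatial variables. -/
def dirDS (v : V3) (F : ℝ × V3 → V3) (p : ℝ × V3) : V3 :=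
  fun i => v 0 * pdS 0 (fun q => F q i) p + v 1 * pdS 1 (fun q => F q i) p
    + v 2 * pdS 2 (fun q => F q i) p

/-! ### Auxiliary lemmas -/

/-- Scalar component of a vector field. -/
def vcomp (F : ℝ × V3 → V3) (i : Fin 3) : ℝ × V3 → ℝ := fun q => F q i

lemma contDiff_vcomp {F : ℝ × V3 → V3} (hF : ContDiff ℝ 2 F) (i : Fin 3) :
    ContDiff ℝ 2 (vcomp F i) :=
  (ContinuousLinearMap.proj (R := ℝ) (φ := fun _ : Fin 3 => ℝ) i).contDiff.comp hF

lemma hasDerivAt_tline (f : ℝ × V3 → ℝ) {p : ℝ × V3} (hf : DifferentiableAt ℝ f p) :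
    HasDerivAt (fun t => f (t, p.2)) (fderiv ℝ f p (1, 0)) p.1 := by
  have h : HasDerivAt (fun t : ℝ => (t, p.2)) ((1 : ℝ), (0 : V3)) p.1 :=
    (hasDerivAt_id p.1).prodMk (hasDerivAt_const p.1 p.2)
  exact hf.hasFDerivAt.comp_hasDerivAt p.1 h

lemma hasFDerivAt_xslice (f : ℝ × V3 → ℝ) {p : ℝ × V3} (hf : DifferentiableAt ℝ f p) :
    HasFDerivAt (fun y => f (p.1, y))
      ((fderiv ℝ f p).comp ((0 : V3 →L[ℝ] ℝ).prod (ContinuousLinearMap.id ℝ V3))) p.2 := by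
  have h : HasFDerivAt (fun y : V3 => (p.1, y))
      ((0 : V3 →L[ℝ] ℝ).prod (ContinuousLinearMap.id ℝ V3)) p.2 :=
    (hasFDerivAt_const p.1 p.2).prodMk (hasFDerivAt_id p.2)
  exact hf.hasFDerivAt.comp p.2 h

lemma pdS_eq {f : ℝ × V3 → ℝ} {p : ℝ × V3} (hf : DifferentiableAt ℝ f p) (i : Fin 3) :
    pdS i f p = fderiv ℝ f p (0, Pi.single i 1) := by
  unfold pdS
  rw [(hasFDerivAt_xslice f hf).fderiv]
  simp

lemma dtS_eq {f : ℝ × V3 → ℝ} {p : ℝ × V3} (hf : DifferentiableAt ℝ f p) :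
    dtS f p = fderiv ℝ f p (1, 0) :=
  (hasDerivAt_tline f hf).deriv

lemma symm2 {f : ℝ × V3 → ℝ} (hf : ContDiff ℝ 2 f) (p v w : ℝ × V3) :
    fderiv ℝ (fderiv ℝ f) p v w = fderiv ℝ (fderiv ℝ f) p w v := by
  exact second_derivative_symmetric (f := f) (f' := fderiv ℝ f)
    (fun y => (hf.differentiable (by norm_num) y).hasFDerivAt)
    ((((hf.fderiv_right (m := 1) (by norm_num)).differentiable one_ne_zero) p).hasFDerivAt) v w

lemma atom_diff {f : ℝ × V3 → ℝ} (hf : ContDiff ℝ 2 f) (v : ℝ × V3) :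
    Differentiable ℝ (fun q => fderiv ℝ f q v) :=
  ((hf.fderiv_right (m := 1) (by norm_num)).clm_apply contDiff_const).differentiable one_ne_zero

lemma fderiv_atom {f : ℝ × V3 → ℝ} (hf : ContDiff ℝ 2 f) (v : ℝ × V3) (p : ℝ × V3) :
    fderiv ℝ (fun q => fderiv ℝ f q v) p = (fderiv ℝ (fderiv ℝ f) p).flip v := by
  have h1 : DifferentiableAt ℝ (fderiv ℝ f) p :=
    ((hf.fderiv_right (m := 1) (by norm_num)).differentiable one_ne_zero) p
  have := (h1.hasFDerivAt.clm_apply (hasFDerivAt_const v p)).fderiv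
  simpa using this

lemma vec3_ext {a b : V3} (h0 : a 0 = b 0) (h1 : a 1 = b 1) (h2 : a 2 = b 2) : a = b := by
  funext i
  fin_cases i <;> assumption

lemma pdS_vcomp {F : ℝ × V3 → V3} (hF : ContDiff ℝ 2 F) (i j : Fin 3) (q : ℝ × V3) :
    pdS j (fun r => F r i) q = fderiv ℝ (vcomp F i) q (0, Pi.single j 1) :=
  pdS_eq ((contDiff_vcomp hF i).differentiable (by norm_num) q) j

lemma dtV_eq {F : ℝ × V3 → V3} (hF : ContDiff ℝ 2 F) (p : ℝ × V3) (i : Fin 3) :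
    dtV F p i = fderiv ℝ (vcomp F i) p (1, 0) := by
  have H : HasDerivAt (fun t => F (t, p.2)) (fun j => fderiv ℝ (vcomp F j) p (1, 0)) p.1 :=
    hasDerivAt_pi.2 (fun j =>
      hasDerivAt_tline (vcomp F j) ((contDiff_vcomp hF j).differentiable (by norm_num) p))
  exact congrFun H.deriv i

set_option maxHeartbeats 2000000 in
/-- resistive magnetic helicity transport equation
`∂(A·B)/∂t + ∇·[u(A·B) + (ψ − A·u)B + (J×A)/σ] = −2(J·B)/σ`. -/
theorem resistive_magnetic_helicity_transport
    (A u : ℝ × V3 → V3) (ψ : ℝ × V3 → ℝ) (σ : ℝ) (hσ : 0 < σ)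
    (hA : ContDiff ℝ 2 A) (hu : ContDiff ℝ 2 u) (hψ : ContDiff ℝ 2 ψ)
    (B J E : ℝ × V3 → V3)
    (hB : ∀ p, B p = curlS A p) (hJ : ∀ p, J p = curlS B p)
    (hE : ∀ p, E p = -cross3 (u p) (B p) + σ⁻¹ • J p)
    (hFaraday : ∀ p, dtV A p + E p + gradS ψ p = 0) :
    ∀ p : ℝ × V3,
      dtS (fun q => dot3 (A q) (B q)) p
        + divS (fun q => dot3 (A q) (B q) • u q + (ψ q - dot3 (A q) (u q)) • B q
            + σ⁻¹ • cross3 (J q) (A q)) p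
        = -2 * dot3 (J p) (B p) / σ := by
  intro p
  have hσ0 : σ ≠ 0 := ne_of_gt hσ
  have hA0 := contDiff_vcomp hA 0
  have hA1 := contDiff_vcomp hA 1
  have hA2 := contDiff_vcomp hA 2
  -- B in atomic form
  have hBp : ∀ q, B q = ![(fderiv ℝ (vcomp A 2) q (0, Pi.single 1 1) - fderiv ℝ (vcomp A 1) q (0, Pi.single 2 1)), (fderiv ℝ (vcomp A 0) q (0, Pi.single 2 1) - fderiv ℝ (vcomp A 2) q (0, Pi.single 0 1)), (fderiv ℝ (vcomp A 1) q (0, Pi.single 0 1) - fderiv ℝ (vcomp A 0) q (0, Pi.single 1 1))] := by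
    intro q
    rw [hB q]
    unfold curlS
    rw [pdS_vcomp hA 2 1 q, pdS_vcomp hA 1 2 q, pdS_vcomp hA 0 2 q,
        pdS_vcomp hA 2 0 q, pdS_vcomp hA 1 0 q, pdS_vcomp hA 0 1 q]
  -- Ohm/Faraday: J in atomic form
  have hJc : ∀ (q : ℝ × V3) (i : Fin 3), J q i =
      σ * (cross3 (u q) (![(fderiv ℝ (vcomp A 2) q (0, Pi.single 1 1) - fderiv ℝ (vcomp A 1) q (0, Pi.single 2 1)), (fderiv ℝ (vcomp A 0) q (0, Pi.single 2 1) - fderiv ℝ (vcomp A 2) q (0, Pi.single 0 1)), (fderiv ℝ (vcomp A 1) q (0, Pi.single 0 1) - fderiv ℝ (vcomp A 0) q (0, Pi.single 1 1))]) i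
        - fderiv ℝ ψ q (0, Pi.single i 1) - fderiv ℝ (vcomp A i) q (1, 0)) := by
    intro q i
    have h := hFaraday q
    rw [hE q] at h
    have h2 := congrFun h i
    simp only [Pi.add_apply, Pi.neg_apply, Pi.smul_apply, smul_eq_mul, Pi.zero_apply] at h2
    rw [dtV_eq hA q i] at h2
    simp only [gradS] at h2
    rw [pdS_eq (hψ.differentiable (by norm_num) q) i] at h2
    rw [hBp q] at h2
    field_simp at h2 ⊢
    linarith
  -- the A·B function in atomic form
  have hdotf : (fun q => dot3 (A q) (B q)) = (fun q => vcomp A 0 q * (fderiv ℝ (vcomp A 2) q (0, Pi.single 1 1) - fderiv ℝ (vcomp A 1) q (0, Pi.single 2 1)) + vcomp A 1 q * (fderiv ℝ (vcomp A 0) q (0, Pi.single 2 1) - fderiv ℝ (vcomp A 2) q (0, Pi.single 0 1)) + vcomp A 2 q * (fderiv ℝ (vcomp A 1) q (0, Pi.single 0 1) - fderiv ℝ (vcomp A 0) q (0, Pi.single 1 1))) := by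
    funext q
    rw [hBp q]
    rfl
  rw [hdotf]
  -- flux simplification
  have hflux : (fun q => dot3 (A q) (B q) • u q + (ψ q - dot3 (A q) (u q)) • B q
            + σ⁻¹ • cross3 (J q) (A q))
      = (fun q => ![ψ q * (fderiv ℝ (vcomp A 2) q (0, Pi.single 1 1) - fderiv ℝ (vcomp A 1) q (0, Pi.single 2 1)) - (fderiv ℝ (ψ) q (0, Pi.single 1 1) * vcomp A 2 q - fderiv ℝ (ψ) q (0, Pi.single 2 1) * vcomp A 1 q) - (fderiv ℝ (vcomp A 1) q (1, 0) * vcomp A 2 q - fderiv ℝ (vcomp A 2) q (1, 0) * vcomp A 1 q), ψ q * (fderiv ℝ (vcomp A 0) q (0, Pi.single 2 1) - fderiv ℝ (vcomp A 2) q (0, Pi.single 0 1)) - (fderiv ℝ (ψ) q (0, Pi.single 2 1) * vcomp A 0 q - fderiv ℝ (ψ) q (0, Pi.single 0 1) * vcomp A 2 q) - (fderiv ℝ (vcomp A 2) q (1, 0) * vcomp A 0 q - fderiv ℝ (vcomp A 0) q (1, 0) * vcomp A 2 q), ψ q * (fderiv ℝ (vcomp A 1) q (0, Pi.single 0 1)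 - fderiv ℝ (vcomp A 0) q (0, Pi.single 1 1)) - (fderiv ℝ (ψ) q (0, Pi.single 0 1) * vcomp A 1 q - fderiv ℝ (ψ) q (0, Pi.single 1 1) * vcomp A 0 q) - (fderiv ℝ (vcomp A 0) q (1, 0) * vcomp A 1 q - fderiv ℝ (vcomp A 1) q (1, 0) * vcomp A 0 q)]) := by
    funext q
    rw [hBp q]
    refine vec3_ext ?_ ?_ ?_
    · simp only [Pi.add_apply, Pi.smul_apply, smul_eq_mul, dot3, cross3,
        Matrix.cons_val_zero, Matrix.cons_val_one, Matrix.head_cons,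
        Matrix.cons_val_two, Matrix.tail_cons, Fin.isValue]
      rw [hJc q 1, hJc q 2]
      simp only [cross3, Matrix.cons_val_zero, Matrix.cons_val_one, Matrix.head_cons,
        Matrix.cons_val_two, Matrix.tail_cons, Fin.isValue, vcomp]
      field_simp
      ring
    · simp only [Pi.add_apply, Pi.smul_apply, smul_eq_mul, dot3, cross3,
        Matrix.cons_val_zero, Matrix.cons_val_one, Matrix.head_cons,
        Matrix.cons_val_two, Matrix.tail_cons, Fin.isValue]
      rw [hJc q 2, hJc q 0]
      simp only [cross3, Matrix.cons_val_zero, Matrix.cons_val_one, Matrix.head_cons,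
        Matrix.cons_val_two, Matrix.tail_cons, Fin.isValue, vcomp]
      field_simp
      ring
    · simp only [Pi.add_apply, Pi.smul_apply, smul_eq_mul, dot3, cross3,
        Matrix.cons_val_zero, Matrix.cons_val_one, Matrix.head_cons,
        Matrix.cons_val_two, Matrix.tail_cons, Fin.isValue]
      rw [hJc q 0, hJc q 1]
      simp only [cross3, Matrix.cons_val_zero, Matrix.cons_val_one, Matrix.head_cons,
        Matrix.cons_val_two, Matrix.tail_cons, Fin.isValue, vcomp]
      field_simp
      ring
  rw [hflux]
  -- time derivative term
  have ht0 := hasDerivAt_tline (vcomp A 0) (hA0.differentiable (by norm_num) p)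
  have ht1 := hasDerivAt_tline (vcomp A 1) (hA1.differentiable (by norm_num) p)
  have ht2 := hasDerivAt_tline (vcomp A 2) (hA2.differentiable (by norm_num) p)
  have hm01 : HasDerivAt (fun t => fderiv ℝ (vcomp A 0) (t, p.2) (0, Pi.single 1 1))
      (fderiv ℝ (fderiv ℝ (vcomp A 0)) p (1, 0) (0, Pi.single 1 1)) p.1 := by
    have h := hasDerivAt_tline (fun q => fderiv ℝ (vcomp A 0) q (0, Pi.single 1 1))
      (atom_diff (contDiff_vcomp hA 0) _ p)
    rwa [fderiv_atom (contDiff_vcomp hA 0) _ p, ContinuousLinearMap.flip_apply] at h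
  have hm02 : HasDerivAt (fun t => fderiv ℝ (vcomp A 0) (t, p.2) (0, Pi.single 2 1))
      (fderiv ℝ (fderiv ℝ (vcomp A 0)) p (1, 0) (0, Pi.single 2 1)) p.1 := by
    have h := hasDerivAt_tline (fun q => fderiv ℝ (vcomp A 0) q (0, Pi.single 2 1))
      (atom_diff (contDiff_vcomp hA 0) _ p)
    rwa [fderiv_atom (contDiff_vcomp hA 0) _ p, ContinuousLinearMap.flip_apply] at h
  have hm10 : HasDerivAt (fun t => fderiv ℝ (vcomp A 1) (t, p.2) (0, Pi.single 0 1))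
      (fderiv ℝ (fderiv ℝ (vcomp A 1)) p (1, 0) (0, Pi.single 0 1)) p.1 := by
    have h := hasDerivAt_tline (fun q => fderiv ℝ (vcomp A 1) q (0, Pi.single 0 1))
      (atom_diff (contDiff_vcomp hA 1) _ p)
    rwa [fderiv_atom (contDiff_vcomp hA 1) _ p, ContinuousLinearMap.flip_apply] at h
  have hm12 : HasDerivAt (fun t => fderiv ℝ (vcomp A 1) (t, p.2) (0, Pi.single 2 1))
      (fderiv ℝ (fderiv ℝ (vcomp A 1)) p (1, 0) (0, Pi.single 2 1)) p.1 := by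
    have h := hasDerivAt_tline (fun q => fderiv ℝ (vcomp A 1) q (0, Pi.single 2 1))
      (atom_diff (contDiff_vcomp hA 1) _ p)
    rwa [fderiv_atom (contDiff_vcomp hA 1) _ p, ContinuousLinearMap.flip_apply] at h
  have hm20 : HasDerivAt (fun t => fderiv ℝ (vcomp A 2) (t, p.2) (0, Pi.single 0 1))
      (fderiv ℝ (fderiv ℝ (vcomp A 2)) p (1, 0) (0, Pi.single 0 1)) p.1 := by
    have h := hasDerivAt_tline (fun q => fderiv ℝ (vcomp A 2) q (0, Pi.single 0 1))
      (atom_diff (contDiff_vcomp hA 2) _ p)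
    rwa [fderiv_atom (contDiff_vcomp hA 2) _ p, ContinuousLinearMap.flip_apply] at h
  have hm21 : HasDerivAt (fun t => fderiv ℝ (vcomp A 2) (t, p.2) (0, Pi.single 1 1))
      (fderiv ℝ (fderiv ℝ (vcomp A 2)) p (1, 0) (0, Pi.single 1 1)) p.1 := by
    have h := hasDerivAt_tline (fun q => fderiv ℝ (vcomp A 2) q (0, Pi.single 1 1))
      (atom_diff (contDiff_vcomp hA 2) _ p)
    rwa [fderiv_atom (contDiff_vcomp hA 2) _ p, ContinuousLinearMap.flip_apply] at h
  have Htime := ((ht0.mul (hm21.sub hm12)).add (ht1.mul (hm02.sub hm20))).add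
    (ht2.mul (hm10.sub hm01))
  have htime : dtS (fun q => vcomp A 0 q * (fderiv ℝ (vcomp A 2) q (0, Pi.single 1 1) - fderiv ℝ (vcomp A 1) q (0, Pi.single 2 1)) + vcomp A 1 q * (fderiv ℝ (vcomp A 0) q (0, Pi.single 2 1) - fderiv ℝ (vcomp A 2) q (0, Pi.single 0 1)) + vcomp A 2 q * (fderiv ℝ (vcomp A 1) q (0, Pi.single 0 1) - fderiv ℝ (vcomp A 0) q (0, Pi.single 1 1))) p = (fderiv ℝ (vcomp A 0) p (1, 0) * (fderiv ℝ (vcomp A 2) p (0, Pi.single 1 1) - fderiv ℝ (vcomp A 1) p (0, Pi.single 2 1)) + vcomp A 0 p * (fderiv ℝ (fderiv ℝ (vcomp A 2)) p (1, 0) (0, Pi.single 1 1) - fderiv ℝ (fderiv ℝ (vcomp A 1)) p (1, 0) (0, Pi.single 2 1))) + (fderiv ℝ (vcomp A 1) p (1, 0) * (fderiv ℝ (vcomp A 0) p (0, Pi.single 2 1) - fderiv ℝ (vcomp A 2) p (0, Pi.single 0 1)) + vcomp A 1 p * (fderiv ℝ (fderiv ℝ (vcomp A 0)) p (1, 0)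 (0, Pi.single 2 1) - fderiv ℝ (fderiv ℝ (vcomp A 2)) p (1, 0) (0, Pi.single 0 1))) + (fderiv ℝ (vcomp A 2) p (1, 0) * (fderiv ℝ (vcomp A 1) p (0, Pi.single 0 1) - fderiv ℝ (vcomp A 0) p (0, Pi.single 1 1)) + vcomp A 2 p * (fderiv ℝ (fderiv ℝ (vcomp A 1)) p (1, 0) (0, Pi.single 0 1) - fderiv ℝ (fderiv ℝ (vcomp A 0)) p (1, 0) (0, Pi.single 1 1))) := Htime.deriv
  rw [htime]
  -- divergence term
  have Hpsi := hasFDerivAt_xslice ψ (hψ.differentiable (by norm_num) p)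
  have HXA0 := hasFDerivAt_xslice (vcomp A 0) (hA0.differentiable (by norm_num) p)
  have HXA1 := hasFDerivAt_xslice (vcomp A 1) (hA1.differentiable (by norm_num) p)
  have HXA2 := hasFDerivAt_xslice (vcomp A 2) (hA2.differentiable (by norm_num) p)
  have HD01 := hasFDerivAt_xslice (fun q => fderiv ℝ (vcomp A 0) q (0, Pi.single 1 1))
    (atom_diff (contDiff_vcomp hA 0) _ p)
  have HD02 := hasFDerivAt_xslice (fun q => fderiv ℝ (vcomp A 0) q (0, Pi.single 2 1))
    (atom_diff (contDiff_vcomp hA 0) _ p)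
  have HD10 := hasFDerivAt_xslice (fun q => fderiv ℝ (vcomp A 1) q (0, Pi.single 0 1))
    (atom_diff (contDiff_vcomp hA 1) _ p)
  have HD12 := hasFDerivAt_xslice (fun q => fderiv ℝ (vcomp A 1) q (0, Pi.single 2 1))
    (atom_diff (contDiff_vcomp hA 1) _ p)
  have HD20 := hasFDerivAt_xslice (fun q => fderiv ℝ (vcomp A 2) q (0, Pi.single 0 1))
    (atom_diff (contDiff_vcomp hA 2) _ p)
  have HD21 := hasFDerivAt_xslice (fun q => fderiv ℝ (vcomp A 2) q (0, Pi.single 1 1))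
    (atom_diff (contDiff_vcomp hA 2) _ p)
  have HP0 := hasFDerivAt_xslice (fun q => fderiv ℝ ψ q (0, Pi.single 0 1))
    (atom_diff hψ _ p)
  have HP1 := hasFDerivAt_xslice (fun q => fderiv ℝ ψ q (0, Pi.single 1 1))
    (atom_diff hψ _ p)
  have HP2 := hasFDerivAt_xslice (fun q => fderiv ℝ ψ q (0, Pi.single 2 1))
    (atom_diff hψ _ p)
  have HT0 := hasFDerivAt_xslice (fun q => fderiv ℝ (vcomp A 0) q (1, 0))
    (atom_diff (contDiff_vcomp hA 0) _ p)
  have HT1 := hasFDerivAt_xslice (fun q => fderiv ℝ (vcomp A 1) q (1, 0))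
    (atom_diff (contDiff_vcomp hA 1) _ p)
  have HT2 := hasFDerivAt_xslice (fun q => fderiv ℝ (vcomp A 2) q (1, 0))
    (atom_diff (contDiff_vcomp hA 2) _ p)
  have hdc0 : pdS 0 (fun q => ψ q * (fderiv ℝ (vcomp A 2) q (0, Pi.single 1 1) - fderiv ℝ (vcomp A 1) q (0, Pi.single 2 1)) - (fderiv ℝ (ψ) q (0, Pi.single 1 1) * vcomp A 2 q - fderiv ℝ (ψ) q (0, Pi.single 2 1) * vcomp A 1 q) - (fderiv ℝ (vcomp A 1) q (1, 0) * vcomp A 2 q - fderiv ℝ (vcomp A 2) q (1, 0) * vcomp A 1 q)) p = ((ψ p * (fderiv ℝ (fderiv ℝ (vcomp A 2)) p (0, Pi.single 0 1) (0, Pi.single 1 1) - fderiv ℝ (fderiv ℝ (vcomp A 1)) p (0, Pi.single 0 1) (0, Pi.single 2 1)) + (fderiv ℝ (vcomp A 2) p (0, Pi.single 1 1) - fderiv ℝ (vcomp A 1) p (0, Pi.single 2 1)) * fderiv ℝ (ψ) p (0, Pi.single 0 1)) - ((fderiv ℝ (ψ) p (0, Pi.single 1 1) * fderiv ℝ (vcomp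 A 2) p (0, Pi.single 0 1) + vcomp A 2 p * fderiv ℝ (fderiv ℝ (ψ)) p (0, Pi.single 0 1) (0, Pi.single 1 1)) - (fderiv ℝ (ψ) p (0, Pi.single 2 1) * fderiv ℝ (vcomp A 1) p (0, Pi.single 0 1) + vcomp A 1 p * fderiv ℝ (fderiv ℝ (ψ)) p (0, Pi.single 0 1) (0, Pi.single 2 1))) - ((fderiv ℝ (vcomp A 1) p (1, 0) * fderiv ℝ (vcomp A 2) p (0, Pi.single 0 1) + vcomp A 2 p * fderiv ℝ (fderiv ℝ (vcomp A 1)) p (0, Pi.single 0 1) (1, 0)) - (fderiv ℝ (vcomp A 2) p (1, 0) * fderiv ℝ (vcomp A 1) p (0, Pi.single 0 1) + vcomp A 1 p * fderiv ℝ (fderiv ℝ (vcomp A 2)) p (0, Pi.single 0 1) (1, 0)))) := by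
    have H := ((Hpsi.mul (HD21.sub HD12)).sub ((HP1.mul HXA2).sub (HP2.mul HXA1))).sub
      ((HT1.mul HXA2).sub (HT2.mul HXA1))
    have h := congrArg (fun L : V3 →L[ℝ] ℝ => L (Pi.single 0 1)) H.fderiv
    refine h.trans ?_
    simp only [ContinuousLinearMap.add_apply, ContinuousLinearMap.sub_apply,
      ContinuousLinearMap.smul_apply, smul_eq_mul, ContinuousLinearMap.coe_comp',
      Function.comp_apply, ContinuousLinearMap.prod_apply, ContinuousLinearMap.zero_apply,
      ContinuousLinearMap.coe_id', id_eq,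
      fderiv_atom (contDiff_vcomp hA 0), fderiv_atom (contDiff_vcomp hA 1),
      fderiv_atom (contDiff_vcomp hA 2), fderiv_atom hψ,
      ContinuousLinearMap.flip_apply, Prod.mk.eta, Pi.sub_apply]
    try ring
  have hdc1 : pdS 1 (fun q => ψ q * (fderiv ℝ (vcomp A 0) q (0, Pi.single 2 1) - fderiv ℝ (vcomp A 2) q (0, Pi.single 0 1)) - (fderiv ℝ (ψ) q (0, Pi.single 2 1) * vcomp A 0 q - fderiv ℝ (ψ) q (0, Pi.single 0 1) * vcomp A 2 q) - (fderiv ℝ (vcomp A 2) q (1, 0) * vcomp A 0 q - fderiv ℝ (vcomp A 0) q (1, 0) * vcomp A 2 q)) p = ((ψ p * (fderiv ℝ (fderiv ℝ (vcomp A 0)) p (0, Pi.single 1 1) (0, Pi.single 2 1) - fderiv ℝ (fderiv ℝ (vcomp A 2)) p (0, Pi.single 1 1) (0, Pi.single 0 1)) + (fderiv ℝ (vcomp A 0) p (0, Pi.single 2 1) - fderiv ℝ (vcomp A 2) p (0, Pi.single 0 1)) * fderiv ℝ (ψ) p (0, Pi.single 1 1)) - ((fderiv ℝ (ψ) p (0,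 Pi.single 2 1) * fderiv ℝ (vcomp A 0) p (0, Pi.single 1 1) + vcomp A 0 p * fderiv ℝ (fderiv ℝ (ψ)) p (0, Pi.single 1 1) (0, Pi.single 2 1)) - (fderiv ℝ (ψ) p (0, Pi.single 0 1) * fderiv ℝ (vcomp A 2) p (0, Pi.single 1 1) + vcomp A 2 p * fderiv ℝ (fderiv ℝ (ψ)) p (0, Pi.single 1 1) (0, Pi.single 0 1))) - ((fderiv ℝ (vcomp A 2) p (1, 0) * fderiv ℝ (vcomp A 0) p (0, Pi.single 1 1) + vcomp A 0 p * fderiv ℝ (fderiv ℝ (vcomp A 2)) p (0, Pi.single 1 1) (1, 0)) - (fderiv ℝ (vcomp A 0) p (1, 0) * fderiv ℝ (vcomp A 2) p (0, Pi.single 1 1) + vcomp A 2 p * fderiv ℝ (fderiv ℝ (vcomp A 0)) p (0, Pi.single 1 1) (1, 0)))) := by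
    have H := ((Hpsi.mul (HD02.sub HD20)).sub ((HP2.mul HXA0).sub (HP0.mul HXA2))).sub
      ((HT2.mul HXA0).sub (HT0.mul HXA2))
    have h := congrArg (fun L : V3 →L[ℝ] ℝ => L (Pi.single 1 1)) H.fderiv
    refine h.trans ?_
    simp only [ContinuousLinearMap.add_apply, ContinuousLinearMap.sub_apply,
      ContinuousLinearMap.smul_apply, smul_eq_mul, ContinuousLinearMap.coe_comp',
      Function.comp_apply, ContinuousLinearMap.prod_apply, ContinuousLinearMap.zero_apply,
      ContinuousLinearMap.coe_id', id_eq,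
      fderiv_atom (contDiff_vcomp hA 0), fderiv_atom (contDiff_vcomp hA 1),
      fderiv_atom (contDiff_vcomp hA 2), fderiv_atom hψ,
      ContinuousLinearMap.flip_apply, Prod.mk.eta, Pi.sub_apply]
    try ring
  have hdc2 : pdS 2 (fun q => ψ q * (fderiv ℝ (vcomp A 1) q (0, Pi.single 0 1) - fderiv ℝ (vcomp A 0) q (0, Pi.single 1 1)) - (fderiv ℝ (ψ) q (0, Pi.single 0 1) * vcomp A 1 q - fderiv ℝ (ψ) q (0, Pi.single 1 1) * vcomp A 0 q) - (fderiv ℝ (vcomp A 0) q (1, 0) * vcomp A 1 q - fderiv ℝ (vcomp A 1) q (1, 0) * vcomp A 0 q)) p = ((ψ p * (fderiv ℝ (fderiv ℝ (vcomp A 1)) p (0, Pi.single 2 1) (0, Pi.single 0 1) - fderiv ℝ (fderiv ℝ (vcomp A 0)) p (0, Pi.single 2 1) (0, Pi.single 1 1)) + (fderiv ℝ (vcomp A 1) p (0, Pi.single 0 1) - fderiv ℝ (vcomp A 0) p (0, Pi.single 1 1)) * fderiv ℝ (ψ) p (0, Pi.single 2 1)) - ((fderiv ℝ (ψ) p (0,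 Pi.single 0 1) * fderiv ℝ (vcomp A 1) p (0, Pi.single 2 1) + vcomp A 1 p * fderiv ℝ (fderiv ℝ (ψ)) p (0, Pi.single 2 1) (0, Pi.single 0 1)) - (fderiv ℝ (ψ) p (0, Pi.single 1 1) * fderiv ℝ (vcomp A 0) p (0, Pi.single 2 1) + vcomp A 0 p * fderiv ℝ (fderiv ℝ (ψ)) p (0, Pi.single 2 1) (0, Pi.single 1 1))) - ((fderiv ℝ (vcomp A 0) p (1, 0) * fderiv ℝ (vcomp A 1) p (0, Pi.single 2 1) + vcomp A 1 p * fderiv ℝ (fderiv ℝ (vcomp A 0)) p (0, Pi.single 2 1) (1, 0)) - (fderiv ℝ (vcomp A 1) p (1, 0) * fderiv ℝ (vcomp A 0) p (0, Pi.single 2 1) + vcomp A 0 p * fderiv ℝ (fderiv ℝ (vcomp A 1)) p (0, Pi.single 2 1) (1, 0)))) := by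
    have H := ((Hpsi.mul (HD10.sub HD01)).sub ((HP0.mul HXA1).sub (HP1.mul HXA0))).sub
      ((HT0.mul HXA1).sub (HT1.mul HXA0))
    have h := congrArg (fun L : V3 →L[ℝ] ℝ => L (Pi.single 2 1)) H.fderiv
    refine h.trans ?_
    simp only [ContinuousLinearMap.add_apply, ContinuousLinearMap.sub_apply,
      ContinuousLinearMap.smul_apply, smul_eq_mul, ContinuousLinearMap.coe_comp',
      Function.comp_apply, ContinuousLinearMap.prod_apply, ContinuousLinearMap.zero_apply,
      ContinuousLinearMap.coe_id', id_eq,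
      fderiv_atom (contDiff_vcomp hA 0), fderiv_atom (contDiff_vcomp hA 1),
      fderiv_atom (contDiff_vcomp hA 2), fderiv_atom hψ,
      ContinuousLinearMap.flip_apply, Prod.mk.eta, Pi.sub_apply]
    try ring
  have hdivG : divS (fun q => ![ψ q * (fderiv ℝ (vcomp A 2) q (0, Pi.single 1 1) - fderiv ℝ (vcomp A 1) q (0, Pi.single 2 1)) - (fderiv ℝ (ψ) q (0, Pi.single 1 1) * vcomp A 2 q - fderiv ℝ (ψ) q (0, Pi.single 2 1) * vcomp A 1 q) - (fderiv ℝ (vcomp A 1) q (1, 0) * vcomp A 2 q - fderiv ℝ (vcomp A 2) q (1, 0) * vcomp A 1 q), ψ q * (fderiv ℝ (vcomp A 0) q (0, Pi.single 2 1) - fderiv ℝ (vcomp A 2) q (0, Pi.single 0 1)) - (fderiv ℝ (ψ) q (0, Pi.single 2 1) * vcomp A 0 q - fderiv ℝ (ψ) q (0, Pi.single 0 1) * vcomp A 2 q) - (fderiv ℝ (vcomp A 2) q (1, 0) * vcomp A 0 q - fderiv ℝ (vcomp A 0) q (1, 0) * vcomp A 2 q), ψ q * (fderiv ℝ (vcomp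 A 1) q (0, Pi.single 0 1) - fderiv ℝ (vcomp A 0) q (0, Pi.single 1 1)) - (fderiv ℝ (ψ) q (0, Pi.single 0 1) * vcomp A 1 q - fderiv ℝ (ψ) q (0, Pi.single 1 1) * vcomp A 0 q) - (fderiv ℝ (vcomp A 0) q (1, 0) * vcomp A 1 q - fderiv ℝ (vcomp A 1) q (1, 0) * vcomp A 0 q)]) p
      = ((ψ p * (fderiv ℝ (fderiv ℝ (vcomp A 2)) p (0, Pi.single 0 1) (0, Pi.single 1 1) - fderiv ℝ (fderiv ℝ (vcomp A 1)) p (0, Pi.single 0 1) (0, Pi.single 2 1)) + (fderiv ℝ (vcomp A 2) p (0, Pi.single 1 1) - fderiv ℝ (vcomp A 1) p (0, Pi.single 2 1)) * fderiv ℝ (ψ) p (0, Pi.single 0 1)) - ((fderiv ℝ (ψ) p (0, Pi.single 1 1) * fderiv ℝ (vcomp A 2) p (0, Pi.single 0 1) + vcomp A 2 p * fderiv ℝ (fderiv ℝ (ψ)) p (0, Pi.single 0 1) (0, Pi.single 1 1)) - (fderiv ℝ (ψ) p (0, Pi.single 2 1) * fderiv ℝ (vcomp A 1) p (0, Pi.single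 0 1) + vcomp A 1 p * fderiv ℝ (fderiv ℝ (ψ)) p (0, Pi.single 0 1) (0, Pi.single 2 1))) - ((fderiv ℝ (vcomp A 1) p (1, 0) * fderiv ℝ (vcomp A 2) p (0, Pi.single 0 1) + vcomp A 2 p * fderiv ℝ (fderiv ℝ (vcomp A 1)) p (0, Pi.single 0 1) (1, 0)) - (fderiv ℝ (vcomp A 2) p (1, 0) * fderiv ℝ (vcomp A 1) p (0, Pi.single 0 1) + vcomp A 1 p * fderiv ℝ (fderiv ℝ (vcomp A 2)) p (0, Pi.single 0 1) (1, 0)))) + ((ψ p * (fderiv ℝ (fderiv ℝ (vcomp A 0)) p (0, Pi.single 1 1) (0, Pi.single 2 1) - fderiv ℝ (fderiv ℝ (vcomp A 2)) p (0, Pi.single 1 1) (0, Pi.single 0 1)) + (fderiv ℝ (vcomp A 0) p (0, Pi.single 2 1) - fderiv ℝ (vcomp A 2) p (0, Pi.single 0 1)) * fderiv ℝ (ψ) p (0, Pi.single 1 1)) - ((fderiv ℝ (ψ) p (0, Pi.single 2 1) * fderiv ℝ (vcomp A 0) p (0, Pi.single 1 1) + vcomp A 0 p * fderiv ℝ (fderiv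 ℝ (ψ)) p (0, Pi.single 1 1) (0, Pi.single 2 1)) - (fderiv ℝ (ψ) p (0, Pi.single 0 1) * fderiv ℝ (vcomp A 2) p (0, Pi.single 1 1) + vcomp A 2 p * fderiv ℝ (fderiv ℝ (ψ)) p (0, Pi.single 1 1) (0, Pi.single 0 1))) - ((fderiv ℝ (vcomp A 2) p (1, 0) * fderiv ℝ (vcomp A 0) p (0, Pi.single 1 1) + vcomp A 0 p * fderiv ℝ (fderiv ℝ (vcomp A 2)) p (0, Pi.single 1 1) (1, 0)) - (fderiv ℝ (vcomp A 0) p (1, 0) * fderiv ℝ (vcomp A 2) p (0, Pi.single 1 1) + vcomp A 2 p * fderiv ℝ (fderiv ℝ (vcomp A 0)) p (0, Pi.single 1 1) (1, 0)))) + ((ψ p * (fderiv ℝ (fderiv ℝ (vcomp A 1)) p (0, Pi.single 2 1) (0, Pi.single 0 1) - fderiv ℝ (fderiv ℝ (vcomp A 0)) p (0, Pi.single 2 1) (0, Pi.single 1 1)) + (fderiv ℝ (vcomp A 1) p (0, Pi.single 0 1) - fderiv ℝ (vcomp A 0) p (0, Pi.single 1 1)) * fderiv ℝ (ψ) p (0,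 Pi.single 2 1)) - ((fderiv ℝ (ψ) p (0, Pi.single 0 1) * fderiv ℝ (vcomp A 1) p (0, Pi.single 2 1) + vcomp A 1 p * fderiv ℝ (fderiv ℝ (ψ)) p (0, Pi.single 2 1) (0, Pi.single 0 1)) - (fderiv ℝ (ψ) p (0, Pi.single 1 1) * fderiv ℝ (vcomp A 0) p (0, Pi.single 2 1) + vcomp A 0 p * fderiv ℝ (fderiv ℝ (ψ)) p (0, Pi.single 2 1) (0, Pi.single 1 1))) - ((fderiv ℝ (vcomp A 0) p (1, 0) * fderiv ℝ (vcomp A 1) p (0, Pi.single 2 1) + vcomp A 1 p * fderiv ℝ (fderiv ℝ (vcomp A 0)) p (0, Pi.single 2 1) (1, 0)) - (fderiv ℝ (vcomp A 1) p (1, 0) * fderiv ℝ (vcomp A 0) p (0, Pi.single 2 1) + vcomp A 0 p * fderiv ℝ (fderiv ℝ (vcomp A 1)) p (0, Pi.single 2 1) (1, 0)))) := by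
    simp only [divS, Matrix.cons_val_zero, Matrix.cons_val_one, Matrix.head_cons,
      Matrix.cons_val_two, Matrix.tail_cons]
    rw [hdc0, hdc1, hdc2]
  rw [hdivG]
  -- right-hand side
  rw [hBp p]
  simp only [dot3, Matrix.cons_val_zero, Matrix.cons_val_one, Matrix.head_cons,
    Matrix.cons_val_two, Matrix.tail_cons, Fin.isValue]
  rw [hJc p 0, hJc p 1, hJc p 2]
  simp only [cross3, Matrix.cons_val_zero, Matrix.cons_val_one, Matrix.head_cons,
    Matrix.cons_val_two, Matrix.tail_cons, Fin.isValue]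
  -- symmetry of second derivatives
  rw [symm2 (contDiff_vcomp hA 1) p (0, Pi.single 0 1) (1, 0)]
  rw [symm2 (contDiff_vcomp hA 2) p (0, Pi.single 0 1) (1, 0)]
  rw [symm2 (contDiff_vcomp hA 2) p (0, Pi.single 1 1) (1, 0)]
  rw [symm2 (contDiff_vcomp hA 0) p (0, Pi.single 1 1) (1, 0)]
  rw [symm2 (contDiff_vcomp hA 0) p (0, Pi.single 2 1) (1, 0)]
  rw [symm2 (contDiff_vcomp hA 1) p (0, Pi.single 2 1) (1, 0)]
  rw [symm2 (contDiff_vcomp hA 2) p (0, Pi.single 1 1) (0, Pi.single 0 1)]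
  rw [symm2 (contDiff_vcomp hA 1) p (0, Pi.single 2 1) (0, Pi.single 0 1)]
  rw [symm2 (contDiff_vcomp hA 0) p (0, Pi.single 2 1) (0, Pi.single 1 1)]
  rw [symm2 hψ p (0, Pi.single 1 1) (0, Pi.single 0 1)]
  rw [symm2 hψ p (0, Pi.single 2 1) (0, Pi.single 0 1)]
  rw [symm2 hψ p (0, Pi.single 2 1) (0, Pi.single 1 1)]
  simp only [vcomp]
  field_simp
  ring
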